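/- Let H be an n×n heptadiagonal matrix (n > 4) with g_i ≠ 0 for 1 ≤ i ≤ n-3, g_{n-2} = g_{n-1} = g_n = 1, f_{n-1} = f_n = e_n = 0, and suppose X_{n+1} ≠ 0. Then H is invertible, and the last column of H⁻¹ is C_n = (-Z_1/Z_{n+3}, -Z_2/Z_{n+3}, …, -Z_n/Z_{n+3})ᵗ, i.e., (H⁻¹)_{i,n} = -Z_i/Z_{n+3} for all 1 ≤ i ≤ n. -/

import Mathlib

open Matrix

/-- The `n × n` heptadiagonal matrix of (1.1), with 1-indexed diagonal sequences
`a, b, c, d, e, f, g : ℤ → ℝ` (entry `H i j` with `i, j : Fin n` corresponds to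
row `i+1`, column `j+1` in the paper's indexing). -/
def heptaMatrix (n : ℕ) (a b c d e f g : ℤ → ℝ) : Matrix (Fin n) (Fin n) ℝ :=
  fun i j =>
    if ((j : ℤ) + 1) = ((i : ℤ) + 1) - 3 then a ((i : ℤ) + 1)
    else if ((j : ℤ) + 1) = ((i : ℤ) + 1) - 2 then b ((i : ℤ) + 1)
    else if ((j : ℤ) + 1) = ((i : ℤ) + 1) - 1 then c ((i : ℤ) + 1)
    else if ((j : ℤ) + 1) = ((i : ℤ) + 1) then d ((i : ℤ) + 1)
    else if ((j : ℤ) + 1) = ((i : ℤ) + 1) + 1 then e ((i : ℤ) + 1)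
    else if ((j : ℤ) + 1) = ((i : ℤ) + 1) + 2 then f ((i : ℤ) + 1)
    else if ((j : ℤ) + 1) = ((i : ℤ) + 1) + 3 then g ((i : ℤ) + 1)
    else 0

/-- `W : ℤ → ℝ` satisfies the seven-term recurrence
`aᵢ W_{i-3} + bᵢ W_{i-2} + cᵢ W_{i-1} + dᵢ Wᵢ + eᵢ W_{i+1} + fᵢ W_{i+2} + gᵢ W_{i+3} = 0`
for `1 ≤ i ≤ n`, with out-of-range terms (index `≤ 0`) treated as zero. -/
def SevenTermRec (n : ℕ) (a b c d e f g : ℤ → ℝ) (W : ℤ → ℝ) : Prop :=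
  (∀ j : ℤ, j ≤ 0 → W j = 0) ∧
  (∀ i : ℤ, 1 ≤ i → i ≤ (n : ℤ) →
    a i * W (i - 3) + b i * W (i - 2) + c i * W (i - 1) + d i * W i +
      e i * W (i + 1) + f i * W (i + 2) + g i * W (i + 3) = 0)

/-- The `k`-th standard basis vector of `ℝⁿ` (1-indexed `k`). -/
def stdBasis (n : ℕ) (k : ℤ) : Fin n → ℝ := fun i => if ((i : ℤ) + 1) = k then 1 else 0

/-- The 3×3 determinant with rows formed from `A`, `B`, `C` at indices `p`, `q`, `r`. -/
def det3 (A B C : ℤ → ℝ) (p q r : ℤ) : ℝ :=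
  Matrix.det !![A p, A q, A r; B p, B q, B r; C p, C q, C r]

/-- The `k`-th column (1-indexed, `1 ≤ k ≤ n`) of a matrix, as a vector; `0` out of range. -/
def matCol (n : ℕ) (M : Matrix (Fin n) (Fin n) ℝ) (k : ℤ) : Fin n → ℝ :=
  fun i => if hk : 1 ≤ k ∧ k ≤ (n : ℤ) then M i ⟨(k - 1).toNat, by omega⟩ else 0

lemma det3_expand (A B C : ℤ → ℝ) (p q r : ℤ) :
    det3 A B C p q r =
      A p * (B q * C r - B r * C q) - A q * (B p * C r - B r * C p)
        + A r * (B p * C q - B q * C p) := by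
  simp [det3, Matrix.det_fin_three]; ring

lemma sum_ite_coe {n : ℕ} (c : ℤ) (t : ℤ → ℝ) :
    ∑ j : Fin n, (if ((j : ℤ) + 1) = c then t ((j : ℤ) + 1) else 0)
      = if 1 ≤ c ∧ c ≤ (n : ℤ) then t c else 0 := by
  split_ifs with h
  · rw [Finset.sum_eq_single (⟨(c - 1).toNat, by omega⟩ : Fin n)]
    · rw [if_pos (by simp; omega)]
      congr 1
      simp; omega
    · intro b _ hb
      rw [if_neg]
      intro hbc
      exact hb (by apply Fin.ext; simp only [Fin.val_mk]; omega)
    · simp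
  · apply Finset.sum_eq_zero
    intro j _
    rw [if_neg]
    intro hj
    exact h ⟨by omega, by omega⟩

lemma hepta_entry_mul (n : ℕ) (a b c d e f g : ℤ → ℝ) (W : ℤ → ℝ) (i j : Fin n) :
    heptaMatrix n a b c d e f g i j * W ((j : ℤ) + 1) =
      (if ((j : ℤ) + 1) = ((i : ℤ) + 1) - 3 then a ((i : ℤ) + 1) * W ((j : ℤ) + 1) else 0)
      + (if ((j : ℤ) + 1) = ((i : ℤ) + 1) - 2 then b ((i : ℤ) + 1) * W ((j : ℤ) + 1) else 0)
      + (if ((j : ℤ) + 1) = ((i : ℤ) + 1) - 1 then c ((i : ℤ) + 1) * W ((j : ℤ) + 1) else 0)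
      + (if ((j : ℤ) + 1) = ((i : ℤ) + 1) then d ((i : ℤ) + 1) * W ((j : ℤ) + 1) else 0)
      + (if ((j : ℤ) + 1) = ((i : ℤ) + 1) + 1 then e ((i : ℤ) + 1) * W ((j : ℤ) + 1) else 0)
      + (if ((j : ℤ) + 1) = ((i : ℤ) + 1) + 2 then f ((i : ℤ) + 1) * W ((j : ℤ) + 1) else 0)
      + (if ((j : ℤ) + 1) = ((i : ℤ) + 1) + 3 then g ((i : ℤ) + 1) * W ((j : ℤ) + 1) else 0) := by
  unfold heptaMatrix
  split_ifs <;> first | omega | ring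

lemma hepta_mulVec_apply (n : ℕ) (a b c d e f g : ℤ → ℝ) (W : ℤ → ℝ)
    (hW0 : ∀ j : ℤ, j ≤ 0 → W j = 0) (i : Fin n) :
    (heptaMatrix n a b c d e f g).mulVec (fun j : Fin n => W ((j : ℤ) + 1)) i =
      a ((i : ℤ) + 1) * W ((i : ℤ) + 1 - 3) + b ((i : ℤ) + 1) * W ((i : ℤ) + 1 - 2)
      + c ((i : ℤ) + 1) * W ((i : ℤ) + 1 - 1) + d ((i : ℤ) + 1) * W ((i : ℤ) + 1)
      + (if (i : ℤ) + 1 + 1 ≤ (n : ℤ) then e ((i : ℤ) + 1) * W ((i : ℤ) + 1 + 1) else 0)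
      + (if (i : ℤ) + 1 + 2 ≤ (n : ℤ) then f ((i : ℤ) + 1) * W ((i : ℤ) + 1 + 2) else 0)
      + (if (i : ℤ) + 1 + 3 ≤ (n : ℤ) then g ((i : ℤ) + 1) * W ((i : ℤ) + 1 + 3) else 0) := by
  have hi := i.isLt
  unfold Matrix.mulVec dotProduct
  rw [Finset.sum_congr rfl (fun j _ => hepta_entry_mul n a b c d e f g W i j)]
  rw [Finset.sum_add_distrib, Finset.sum_add_distrib, Finset.sum_add_distrib,
    Finset.sum_add_distrib, Finset.sum_add_distrib, Finset.sum_add_distrib]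
  rw [sum_ite_coe (((i : ℤ) + 1) - 3) (fun m => a ((i : ℤ) + 1) * W m),
    sum_ite_coe (((i : ℤ) + 1) - 2) (fun m => b ((i : ℤ) + 1) * W m),
    sum_ite_coe (((i : ℤ) + 1) - 1) (fun m => c ((i : ℤ) + 1) * W m),
    sum_ite_coe (((i : ℤ) + 1)) (fun m => d ((i : ℤ) + 1) * W m),
    sum_ite_coe (((i : ℤ) + 1) + 1) (fun m => e ((i : ℤ) + 1) * W m),
    sum_ite_coe (((i : ℤ) + 1) + 2) (fun m => f ((i : ℤ) + 1) * W m),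
    sum_ite_coe (((i : ℤ) + 1) + 3) (fun m => g ((i : ℤ) + 1) * W m)]
  have z1 : ∀ (x : ℝ) (m : ℤ), m ≤ 0 → x * W m = 0 := fun x m hm => by rw [hW0 m hm, mul_zero]
  congr 1
  · congr 1
    · congr 1
      · congr 1
        · congr 1
          · congr 1
            · split_ifs with h
              · rfl
              · rw [z1 _ _ (by omega)]
            · split_ifs with h
              · rfl
              · rw [z1 _ _ (by omega)]
          · split_ifs with h
            · rfl
            · rw [z1 _ _ (by omega)]
        · rw [if_pos ⟨by omega, by omega⟩]
      · split_ifs with h1 h2 h2 <;> first | rfl | omega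
    · split_ifs with h1 h2 h2 <;> first | rfl | omega
  · split_ifs with h1 h2 h2 <;> first | rfl | omega

lemma rec_unique (n : ℕ) (a b c d e f g W D : ℤ → ℝ)
    (hg : ∀ i : ℤ, 1 ≤ i → i ≤ (n : ℤ) → g i ≠ 0)
    (hW : SevenTermRec n a b c d e f g W) (hD : SevenTermRec n a b c d e f g D)
    (h1 : W 1 = D 1) (h2 : W 2 = D 2) (h3 : W 3 = D 3) :
    ∀ j : ℤ, j ≤ (n : ℤ) + 3 → W j = D j := by
  have key : ∀ k : ℕ, ∀ j : ℤ, j ≤ (k : ℤ) → j ≤ (n : ℤ) + 3 → W j = D j := by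
    intro k
    induction k with
    | zero => intro j hj _; rw [hW.1 j (by omega), hD.1 j (by omega)]
    | succ k ih =>
      intro j hj hjn
      rcases lt_or_ge j ((k : ℤ) + 1) with h | h
      · exact ih j (by omega) hjn
      · have hjk : j = (k : ℤ) + 1 := by omega
        rcases le_or_gt j 0 with h0 | h0
        · rw [hW.1 j h0, hD.1 j h0]
        · rcases lt_or_ge j 4 with h4 | h4
          · rcases (by omega : j = 1 ∨ j = 2 ∨ j = 3) with rfl | rfl | rfl
            · exact h1
            · exact h2
            · exact h3
          · have eW := hW.2 (j - 3) (by omega) (by omega)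
            have eD := hD.2 (j - 3) (by omega) (by omega)
            rw [ih (j - 3 - 3) (by omega) (by omega), ih (j - 3 - 2) (by omega) (by omega),
              ih (j - 3 - 1) (by omega) (by omega), ih (j - 3) (by omega) (by omega),
              ih (j - 3 + 1) (by omega) (by omega), ih (j - 3 + 2) (by omega) (by omega)] at eW
            have hgne := hg (j - 3) (by omega) (by omega)
            have hcan : g (j - 3) * W (j - 3 + 3) = g (j - 3) * D (j - 3 + 3) := by
              linarith [eW, eD]
            have hj3 : j - 3 + 3 = j := by ring
            rw [hj3] at hcan
            exact mul_left_cancel₀ hgne hcan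
  intro j hj
  exact key (n + 3) j (by push_cast; omega) hj

theorem stmt_7 (n : ℕ) (hn : 4 < n) (a b c d e f g A B C : ℤ → ℝ)
    (hg : ∀ i : ℤ, 1 ≤ i → i ≤ (n : ℤ) - 3 → g i ≠ 0)
    (hg1 : g ((n : ℤ) - 2) = 1) (hg2 : g ((n : ℤ) - 1) = 1) (hg3 : g (n : ℤ) = 1)
    (hf1 : f ((n : ℤ) - 1) = 0) (hf2 : f (n : ℤ) = 0) (he1 : e (n : ℤ) = 0)
    (hA : SevenTermRec n a b c d e f g A) (hA1 : A 1 = 0) (hA2 : A 2 = 0) (hA3 : A 3 = 1)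
    (hB : SevenTermRec n a b c d e f g B) (hB1 : B 1 = 0) (hB2 : B 2 = 1) (hB3 : B 3 = 0)
    (hC : SevenTermRec n a b c d e f g C) (hC1 : C 1 = 1) (hC2 : C 2 = 0) (hC3 : C 3 = 0)
    (hX : det3 A B C ((n : ℤ) + 1) ((n : ℤ) + 2) ((n : ℤ) + 3) ≠ 0) :
    IsUnit (heptaMatrix n a b c d e f g).det ∧
    ∀ i : Fin n,
      (heptaMatrix n a b c d e f g)⁻¹ i ⟨n - 1, by omega⟩ =
        -(det3 A B C ((i : ℤ) + 1) ((n : ℤ) + 1) ((n : ℤ) + 2)) /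
          det3 A B C ((n : ℤ) + 3) ((n : ℤ) + 1) ((n : ℤ) + 2) := by
  have hgall : ∀ i : ℤ, 1 ≤ i → i ≤ (n : ℤ) → g i ≠ 0 := by
    intro i h1 h2
    rcases le_or_gt i ((n : ℤ) - 3) with h | h
    · exact hg i h1 h
    · rcases (by omega : i = (n : ℤ) - 2 ∨ i = (n : ℤ) - 1 ∨ i = (n : ℤ)) with rfl | rfl | rfl
      · rw [hg1]; exact one_ne_zero
      · rw [hg2]; exact one_ne_zero
      · rw [hg3]; exact one_ne_zero
  set H := heptaMatrix n a b c d e f g with hH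
  -- Part 1 : determinant is a unit
  have hdet : H.det ≠ 0 := by
    intro hd
    obtain ⟨v, hv0, hv⟩ := (Matrix.exists_mulVec_eq_zero_iff).mpr hd
    set V : ℤ → ℝ := fun j => if h : 1 ≤ j ∧ j ≤ (n : ℤ) then v ⟨(j - 1).toNat, by omega⟩ else 0
      with hVdef
    have hV0 : ∀ j : ℤ, j ≤ 0 → V j = 0 := by
      intro j hj; rw [hVdef]; exact dif_neg (by omega)
    have hVbig : ∀ j : ℤ, (n : ℤ) < j → V j = 0 := by
      intro j hj; rw [hVdef]; exact dif_neg (by omega)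
    have hVv : (fun j : Fin n => V ((j : ℤ) + 1)) = v := by
      funext j
      rw [hVdef]
      dsimp only
      rw [dif_pos ⟨by omega, by omega⟩]
      congr 1
      apply Fin.ext; simp only [Fin.val_mk]; omega
    have hVrec : SevenTermRec n a b c d e f g V := by
      refine ⟨hV0, ?_⟩
      intro i hi1 hi2
      have hlt : (i - 1).toNat < n := by omega
      set i' : Fin n := ⟨(i - 1).toNat, hlt⟩ with hi'
      have hii : ((i' : ℕ) : ℤ) + 1 = i := by simp only [hi', Fin.val_mk]; omega
      have hmv := hepta_mulVec_apply n a b c d e f g V hV0 i'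
      rw [hVv, ← hH] at hmv
      rw [hv] at hmv
      rw [hii] at hmv
      have t1 : (if i + 1 ≤ (n : ℤ) then e i * V (i + 1) else 0) = e i * V (i + 1) := by
        split_ifs with h
        · rfl
        · rw [hVbig _ (by omega), mul_zero]
      have t2 : (if i + 2 ≤ (n : ℤ) then f i * V (i + 2) else 0) = f i * V (i + 2) := by
        split_ifs with h
        · rfl
        · rw [hVbig _ (by omega), mul_zero]
      have t3 : (if i + 3 ≤ (n : ℤ) then g i * V (i + 3) else 0) = g i * V (i + 3) := by
        split_ifs with h
        · rfl
        · rw [hVbig _ (by omega), mul_zero]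
      rw [t1, t2, t3] at hmv
      simp only [Pi.zero_apply] at hmv
      linarith [hmv]
    set D : ℤ → ℝ := fun j => V 3 * A j + V 2 * B j + V 1 * C j with hDdef
    have hDrec : SevenTermRec n a b c d e f g D := by
      constructor
      · intro j hj; rw [hDdef]; dsimp only
        rw [hA.1 j hj, hB.1 j hj, hC.1 j hj]; ring
      · intro i hi1 hi2
        rw [hDdef]; dsimp only
        linear_combination (V 3) * hA.2 i hi1 hi2 + (V 2) * hB.2 i hi1 hi2
          + (V 1) * hC.2 i hi1 hi2
    have huniq := rec_unique n a b c d e f g V D hgall hVrec hDrec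
      (by rw [hDdef]; dsimp only; rw [hA1, hB1, hC1]; ring)
      (by rw [hDdef]; dsimp only; rw [hA2, hB2, hC2]; ring)
      (by rw [hDdef]; dsimp only; rw [hA3, hB3, hC3]; ring)
    have E1 : V 3 * A ((n : ℤ) + 1) + V 2 * B ((n : ℤ) + 1) + V 1 * C ((n : ℤ) + 1) = 0 := by
      have := huniq ((n : ℤ) + 1) (by omega)
      rw [hVbig _ (by omega), hDdef] at this
      dsimp only at this; linarith [this]
    have E2 : V 3 * A ((n : ℤ) + 2) + V 2 * B ((n : ℤ) + 2) + V 1 * C ((n : ℤ) + 2) = 0 := by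
      have := huniq ((n : ℤ) + 2) (by omega)
      rw [hVbig _ (by omega), hDdef] at this
      dsimp only at this; linarith [this]
    have E3 : V 3 * A ((n : ℤ) + 3) + V 2 * B ((n : ℤ) + 3) + V 1 * C ((n : ℤ) + 3) = 0 := by
      have := huniq ((n : ℤ) + 3) (by omega)
      rw [hVbig _ (by omega), hDdef] at this
      dsimp only at this; linarith [this]
    have hV3 : V 3 = 0 := by
      have h : V 3 * det3 A B C ((n : ℤ) + 1) ((n : ℤ) + 2) ((n : ℤ) + 3) = 0 := by
        rw [det3_expand]
        linear_combination (B ((n:ℤ)+2) * C ((n:ℤ)+3) - B ((n:ℤ)+3) * C ((n:ℤ)+2)) * E1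
          - (B ((n:ℤ)+1) * C ((n:ℤ)+3) - B ((n:ℤ)+3) * C ((n:ℤ)+1)) * E2
          + (B ((n:ℤ)+1) * C ((n:ℤ)+2) - B ((n:ℤ)+2) * C ((n:ℤ)+1)) * E3
      exact (mul_eq_zero.mp h).resolve_right hX
    have hV2 : V 2 = 0 := by
      have h : V 2 * det3 A B C ((n : ℤ) + 1) ((n : ℤ) + 2) ((n : ℤ) + 3) = 0 := by
        rw [det3_expand]
        linear_combination (-(A ((n:ℤ)+2) * C ((n:ℤ)+3) - A ((n:ℤ)+3) * C ((n:ℤ)+2))) * E1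
          + (A ((n:ℤ)+1) * C ((n:ℤ)+3) - A ((n:ℤ)+3) * C ((n:ℤ)+1)) * E2
          - (A ((n:ℤ)+1) * C ((n:ℤ)+2) - A ((n:ℤ)+2) * C ((n:ℤ)+1)) * E3
      exact (mul_eq_zero.mp h).resolve_right hX
    have hV1 : V 1 = 0 := by
      have h : V 1 * det3 A B C ((n : ℤ) + 1) ((n : ℤ) + 2) ((n : ℤ) + 3) = 0 := by
        rw [det3_expand]
        linear_combination (A ((n:ℤ)+2) * B ((n:ℤ)+3) - A ((n:ℤ)+3) * B ((n:ℤ)+2)) * E1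
          - (A ((n:ℤ)+1) * B ((n:ℤ)+3) - A ((n:ℤ)+3) * B ((n:ℤ)+1)) * E2
          + (A ((n:ℤ)+1) * B ((n:ℤ)+2) - A ((n:ℤ)+2) * B ((n:ℤ)+1)) * E3
      exact (mul_eq_zero.mp h).resolve_right hX
    apply hv0
    rw [← hVv]
    funext j
    have := huniq ((j : ℤ) + 1) (by omega)
    rw [hDdef] at this; dsimp only at this
    rw [hV1, hV2, hV3] at this
    simpa using this
  have hu : IsUnit H.det := isUnit_iff_ne_zero.mpr hdet
  refine ⟨hu, ?_⟩
  -- Part 2 : the last column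
  set W : ℤ → ℝ := fun j => det3 A B C j ((n : ℤ) + 1) ((n : ℤ) + 2) with hWdef
  have hW0 : ∀ j : ℤ, j ≤ 0 → W j = 0 := by
    intro j hj
    rw [hWdef]; dsimp only
    rw [det3_expand, hA.1 j hj, hB.1 j hj, hC.1 j hj]; ring
  have hWn1 : W ((n : ℤ) + 1) = 0 := by
    rw [hWdef]; dsimp only; rw [det3_expand]; ring
  have hWn2 : W ((n : ℤ) + 2) = 0 := by
    rw [hWdef]; dsimp only; rw [det3_expand]; ring
  have hWX : W ((n : ℤ) + 3) = det3 A B C ((n : ℤ) + 1) ((n : ℤ) + 2) ((n : ℤ) + 3) := by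
    rw [hWdef]; dsimp only; rw [det3_expand, det3_expand]; ring
  have hWne : W ((n : ℤ) + 3) ≠ 0 := by rw [hWX]; exact hX
  have hWrec : SevenTermRec n a b c d e f g W := by
    refine ⟨hW0, ?_⟩
    intro i hi1 hi2
    have eA := hA.2 i hi1 hi2
    have eB := hB.2 i hi1 hi2
    have eC := hC.2 i hi1 hi2
    simp only [hWdef, det3_expand]
    linear_combination (B ((n:ℤ)+1) * C ((n:ℤ)+2) - B ((n:ℤ)+2) * C ((n:ℤ)+1)) * eA
      + (A ((n:ℤ)+2) * C ((n:ℤ)+1) - A ((n:ℤ)+1) * C ((n:ℤ)+2)) * eB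
      + (A ((n:ℤ)+1) * B ((n:ℤ)+2) - A ((n:ℤ)+2) * B ((n:ℤ)+1)) * eC
  set k : Fin n := ⟨n - 1, by omega⟩ with hk
  have hmv : H *ᵥ (fun j : Fin n => W ((j : ℤ) + 1)) = (-W ((n : ℤ) + 3)) • (Pi.single k (1 : ℝ) : Fin n → ℝ) := by
    funext i
    have hi := i.isLt
    rw [hH, hepta_mulVec_apply n a b c d e f g W hW0 i]
    have hrec := hWrec.2 ((i : ℤ) + 1) (by omega) (by omega)
    rw [Pi.smul_apply, Pi.single_apply, smul_eq_mul]
    by_cases hlast : ((i : ℕ) : ℤ) + 1 = (n : ℤ)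
    · have hik : i = k := by apply Fin.ext; simp only [hk, Fin.val_mk]; omega
      rw [if_pos hik, mul_one]
      rw [hlast] at hrec ⊢
      rw [hWn1, hWn2, hg3] at hrec
      rw [if_neg (by omega), if_neg (by omega), if_neg (by omega)]
      linarith [hrec]
    · have hik : ¬ i = k := by
        intro h; apply hlast; rw [h]; simp only [hk, Fin.val_mk]; omega
      rw [if_neg hik, mul_zero]
      rw [if_pos (by omega)]
      have t2 : (if ((i : ℕ) : ℤ) + 1 + 2 ≤ (n : ℤ)
          then f (((i : ℕ) : ℤ) + 1) * W (((i : ℕ) : ℤ) + 1 + 2) else 0)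
          = f (((i : ℕ) : ℤ) + 1) * W (((i : ℕ) : ℤ) + 1 + 2) := by
        split_ifs with h
        · rfl
        · rw [(by omega : ((i : ℕ) : ℤ) + 1 + 2 = (n : ℤ) + 1), hWn1, mul_zero]
      have t3 : (if ((i : ℕ) : ℤ) + 1 + 3 ≤ (n : ℤ)
          then g (((i : ℕ) : ℤ) + 1) * W (((i : ℕ) : ℤ) + 1 + 3) else 0)
          = g (((i : ℕ) : ℤ) + 1) * W (((i : ℕ) : ℤ) + 1 + 3) := by
        split_ifs with h
        · rfl
        · rcases (by omega : ((i : ℕ) : ℤ) + 1 + 3 = (n : ℤ) + 1 ∨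
              ((i : ℕ) : ℤ) + 1 + 3 = (n : ℤ) + 2) with h' | h'
          · rw [h', hWn1, mul_zero]
          · rw [h', hWn2, mul_zero]
      rw [t2, t3]
      linarith [hrec]
  intro i
  have hcol : H⁻¹ *ᵥ Pi.single k (1 : ℝ) = (-W ((n : ℤ) + 3))⁻¹ • (fun j : Fin n => W ((j : ℤ) + 1)) := by
    have hne : (-W ((n : ℤ) + 3)) ≠ 0 := neg_ne_zero.mpr hWne
    have : Pi.single k (1 : ℝ) = H *ᵥ ((-W ((n : ℤ) + 3))⁻¹ • (fun j : Fin n => W ((j : ℤ) + 1))) := by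
      rw [Matrix.mulVec_smul, hmv, smul_smul, inv_mul_cancel₀ hne, one_smul]
    rw [this, Matrix.mulVec_mulVec, Matrix.nonsing_inv_mul H hu, Matrix.one_mulVec]
  have happ : H⁻¹ i k = (-W ((n : ℤ) + 3))⁻¹ * W ((i : ℤ) + 1) := by
    have h1 : (H⁻¹ *ᵥ Pi.single k (1 : ℝ)) i = H⁻¹ i k := by
      simp [Matrix.mulVec, dotProduct, Pi.single_apply]
    rw [← h1, hcol]
    simp
  rw [happ]
  have h2 : det3 A B C ((i : ℤ) + 1) ((n : ℤ) + 1) ((n : ℤ) + 2) = W ((i : ℤ) + 1) := by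
    rw [hWdef]
  have h3 : det3 A B C ((n : ℤ) + 3) ((n : ℤ) + 1) ((n : ℤ) + 2) = W ((n : ℤ) + 3) := by
    rw [hWdef]
  rw [h2, h3]
  field_simp
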